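/- arXiv:1808.10304 — 2 statements merged into one kernel-verified Lean document; each statement's English description precedes it below -/
import Mathlib

section
/- Let ⟨𝒟_i : i ∈ ℕ⟩ be a sequence of open dense subsets of the tree Hechler poset ℍ. Let A ⊆ ℕ be infinite, and suppose that for each i ∈ ℕ (with S_i := {stem(T) : T ∈ 𝒟_i}), for every finite sequence t ∈ ℕ^{<ω} and every ordinal α, if the set B := {z ∈ ℕ : t⌢z is β-S_i-reachable for some β < α} is infinite, then B \ A is infinite. Then for every x : ℕ → ℕ there is a decreasing sequence T_0 ⊇ T_1 ⊇ ⋯ in ℍ with T_i ∈ 𝒟_i for every i, such that the union g of the stems of the T_i is a (total) function ℕ → ℕ, the set {n ∈ ℕ : g(n) ∈ A} is infinite, and x is the real A-encoded by g. -/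
namespace GCH

/-! ### Turing reducibility -/

/-- `RecursiveIn O f` : the partial function `f : ℕ →. ℕ` is partial recursive relative
to the oracle `O`.  This is the relativization of `Nat.Partrec`. -/
inductive RecursiveIn (O : ℕ →. ℕ) : (ℕ →. ℕ) → Prop
  | oracle : RecursiveIn O O
  | zero : RecursiveIn O (pure 0)
  | succ : RecursiveIn O ↑Nat.succ
  | left : RecursiveIn O ↑fun n : ℕ => n.unpair.1
  | right : RecursiveIn O ↑fun n : ℕ => n.unpair.2
  | pair {f g} : RecursiveIn O f → RecursiveIn O g →
      RecursiveIn O fun n => Nat.pair <$> f n <*> g n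
  | comp {f g} : RecursiveIn O f → RecursiveIn O g →
      RecursiveIn O fun n => g n >>= f
  | prec {f g} : RecursiveIn O f → RecursiveIn O g →
      RecursiveIn O (Nat.unpaired fun a n =>
        n.rec (f a) fun y IH => do let i ← IH; g (Nat.pair a (Nat.pair y i)))
  | rfind {f} : RecursiveIn O f →
      RecursiveIn O fun a => Nat.rfind fun n => (fun m => m = 0) <$> f (Nat.pair a n)

/-- Turing reducibility `f ≤_T g` for total functions `ℕ → ℕ`. -/
def TuringReducible (f g : ℕ → ℕ) : Prop :=
  RecursiveIn (g : ℕ →. ℕ) (f : ℕ →. ℕ)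

/-- The Turing join `a ⊕ b` : `(a ⊕ b)(2n) = a(n)`, `(a ⊕ b)(2n+1) = b(n)`. -/
def join (a b : ℕ → ℕ) : ℕ → ℕ := fun n =>
  if n % 2 = 0 then a (n / 2) else b (n / 2)

open Classical in
/-- The characteristic function of `A ⊆ ℕ`. -/
noncomputable def chi (A : Set ℕ) : ℕ → ℕ := fun n => if n ∈ A then 1 else 0

/-! ### The tree Hechler poset `ℍ` -/

/-- A condition in the tree Hechler poset `ℍ` : a nonempty tree `T ⊆ ℕ^{<ω}` closed under
initial segments, having a stem (the longest node comparable with every node of the tree),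
such that every node extending the stem has cofinitely many immediate successors.
The order is inclusion of trees: `T' ≤ T` iff `T'.tree ⊆ T.tree`. -/
structure Hechler where
  /-- the underlying set of finite sequences -/
  tree : Set (List ℕ)
  nonempty : tree.Nonempty
  /-- closed under initial segments -/
  closed : ∀ ⦃s t : List ℕ⦄, s <+: t → t ∈ tree → s ∈ tree
  /-- the stem -/
  stem : List ℕ
  stem_mem : stem ∈ tree
  /-- the stem is comparable with every node of the tree -/
  stem_comparable : ∀ t ∈ tree, stem <+: t ∨ t <+: stem
  /-- the stem is the longest node comparable with every node of the tree -/
  stem_longest : ∀ s ∈ tree, (∀ t ∈ tree, s <+: t ∨ t <+: s) → s.length ≤ stem.length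
  /-- every node extending the stem has cofinitely many immediate successors -/
  succ_cofinite : ∀ t ∈ tree, stem <+: t → {z : ℕ | t ++ [z] ∉ tree}.Finite

/-- `D ⊆ ℍ` is dense: every condition has a subset in `D`. -/
def HDense (D : Set Hechler) : Prop := ∀ T : Hechler, ∃ T' ∈ D, T'.tree ⊆ T.tree

/-- `D ⊆ ℍ` is open: any condition included in a member of `D` is in `D`. -/
def HOpen (D : Set Hechler) : Prop :=
  ∀ T T' : Hechler, T'.tree ⊆ T.tree → T ∈ D → T' ∈ D

/-- The set of stems of members of `D`. -/
def stems (D : Set Hechler) : Set (List ℕ) := {s | ∃ T ∈ D, T.stem = s}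

open Classical in
/-- `ReachAt S α t` : `t` is `α`-`S`-reachable.  `t` is `0`-`S`-reachable iff `t ∈ S`;
for `α > 0`, `t` is `α`-`S`-reachable iff infinitely many `z` are such that `t ⌢ z` is
`β`-`S`-reachable for some `β < α`. -/
noncomputable def ReachAt (S : Set (List ℕ)) (α : Ordinal.{0}) (t : List ℕ) : Prop :=
  if α = 0 then t ∈ S
  else {z : ℕ | ∃ β : Ordinal.{0}, ∃ _ : β < α, ReachAt S β (t ++ [z])}.Infinite
termination_by α

/-- `t` is `S`-reachable iff it is `α`-`S`-reachable for some ordinal `α`. -/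
def SReachable (S : Set (List ℕ)) (t : List ℕ) : Prop := ∃ α : Ordinal.{0}, ReachAt S α t

/-- `t' ⊒_A t` : `t'` extends `t` and takes no new value in `A`. -/
def ExtOutside (A : Set ℕ) (t t' : List ℕ) : Prop :=
  t <+: t' ∧ ∀ (k : ℕ) (h : k < t'.length), t.length ≤ k → t'.get ⟨k, h⟩ ∉ A

/-- The union of the stems of the `T i` is the total function `g : ℕ → ℕ`:
each stem is an initial segment of `g` and the stem lengths are unbounded. -/
def stemsUnion (T : ℕ → Hechler) (g : ℕ → ℕ) : Prop :=
  (∀ (i k : ℕ) (h : k < (T i).stem.length), (T i).stem.get ⟨k, h⟩ = g k) ∧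
    ∀ n : ℕ, ∃ i, n < (T i).stem.length

open Classical in
/-- The real `A`-encoded by `g` (relative to the fixed function `θ`):
its `i`-th value is `η_A(g(n_i))` where `n_0 < n_1 < ⋯` enumerates `{n | g n ∈ A}`
and `η_A = θ ∘ e_A⁻¹` with `e_A` the increasing enumeration of `A`. -/
noncomputable def encodedReal (θ : ℕ → ℕ) (A : Set ℕ) (g : ℕ → ℕ) : ℕ → ℕ :=
  fun i => θ (Nat.count (· ∈ A) (g (Nat.nth (fun n => g n ∈ A) i)))

section AuxGCH

open Classical

lemma reachAt_zero {S : Set (List ℕ)} {t : List ℕ} : ReachAt S 0 t ↔ t ∈ S := by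
  rw [ReachAt]; simp

lemma reachAt_pos {S : Set (List ℕ)} {α : Ordinal.{0}} (hα : α ≠ 0) {t : List ℕ} :
    ReachAt S α t ↔
      {z : ℕ | ∃ β : Ordinal.{0}, ∃ _ : β < α, ReachAt S β (t ++ [z])}.Infinite := by
  rw [ReachAt]; simp [hα]

lemma succ_reach_finite {S : Set (List ℕ)} {t : List ℕ} (h : ¬ SReachable S t) :
    {z : ℕ | SReachable S (t ++ [z])}.Finite := by
  by_contra hinf
  rw [← Set.not_infinite, not_not] at hinf
  set r : ℕ → Ordinal.{0} := fun z => if h : SReachable S (t ++ [z]) then h.choose else 0 with hr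
  apply h
  refine ⟨Order.succ (iSup r), ?_⟩
  rw [reachAt_pos (Ordinal.succ_ne_zero _)]
  refine hinf.mono ?_
  intro z hz
  refine ⟨r z, (le_ciSup (Ordinal.bddAbove_range r) z).trans_lt (Order.lt_succ _), ?_⟩
  have hrz : r z = hz.choose := by
    simp only [hr]
    exact dif_pos hz
  rw [hrz]; exact hz.choose_spec

lemma extOutside_refl (A : Set ℕ) (t : List ℕ) : ExtOutside A t t :=
  ⟨List.prefix_refl t, fun k h hk => absurd h (by omega)⟩

lemma extOutside_trans {A : Set ℕ} {t₁ t₂ t₃ : List ℕ}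
    (h1 : ExtOutside A t₁ t₂) (h2 : ExtOutside A t₂ t₃) : ExtOutside A t₁ t₃ := by
  refine ⟨h1.1.trans h2.1, fun k h hk => ?_⟩
  by_cases hk2 : k < t₂.length
  · have := h1.2 k hk2 hk
    have he : t₃.get ⟨k, h⟩ = t₂.get ⟨k, hk2⟩ := by
      simp only [List.get_eq_getElem]
      exact (h2.1.getElem hk2).symm
    rw [he]; exact this
  · exact h2.2 k h (by omega)

lemma extOutside_snoc {A : Set ℕ} {z : ℕ} (t : List ℕ) (hz : z ∉ A) :
    ExtOutside A t (t ++ [z]) := by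
  refine ⟨List.prefix_append t [z], fun k h hk => ?_⟩
  have hlen : (t ++ [z]).length = t.length + 1 := by simp
  have hkt : k = t.length := by omega
  subst hkt
  simpa using hz

lemma prefix_snoc_cases {u v : List ℕ} {z : ℕ} (h : v <+: u ++ [z]) :
    v <+: u ∨ v = u ++ [z] := by
  rcases le_or_gt v.length u.length with hle | hlt
  · exact Or.inl (List.prefix_of_prefix_length_le h (List.prefix_append u [z]) hle)
  · refine Or.inr (h.eq_of_length ?_)
    have := h.length_le
    simp only [List.length_append, List.length_singleton] at *
    omega

/-- Helper to prove the `stem_longest` field. -/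
lemma stem_longest_of {tr : Set (List ℕ)} {st : List ℕ}
    (hsucc : {z : ℕ | st ++ [z] ∉ tr}.Finite)
    (hcomp : ∀ t ∈ tr, st <+: t ∨ t <+: st) :
    ∀ s ∈ tr, (∀ t ∈ tr, s <+: t ∨ t <+: s) → s.length ≤ st.length := by
  intro s hs hcall
  rcases hcomp s hs with h | h
  · by_contra hlen
    push_neg at hlen
    have hlt : st.length < s.length := hlen
    have hinf : {z : ℕ | st ++ [z] ∈ tr}.Infinite := by
      have h2 := hsucc.infinite_compl
      apply h2.mono
      intro z hz
      simp only [Set.mem_compl_iff, Set.mem_setOf_eq, not_not] at hz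
      exact hz
    have hne : ¬ {z : ℕ | st ++ [z] ∈ tr} ⊆ {s.get ⟨st.length, hlt⟩} :=
      fun hsub => hinf (Set.Finite.subset (Set.finite_singleton _) hsub)
    rw [Set.not_subset] at hne
    obtain ⟨z, hzmem, hzne⟩ := hne
    have hzne' : z ≠ s.get ⟨st.length, hlt⟩ := hzne
    rcases hcall (st ++ [z]) hzmem with hc | hc
    · -- s <+: st ++ [z] : lengths force s = st ++ [z]
      rcases prefix_snoc_cases hc with h' | h'
      · exact absurd h'.length_le (by omega)
      · apply hzne'
        subst h'
        simp only [List.get_eq_getElem]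
        simp
    · -- st ++ [z] <+: s : then s.get (st.length) = z
      apply hzne'
      have hlt2 : st.length < (st ++ [z]).length := by simp
      have := hc.getElem hlt2
      simp only [List.get_eq_getElem]
      rw [← this]
      simp
  · exact h.length_le

/-- The full tree as a Hechler condition. -/
def fullT : Hechler where
  tree := Set.univ
  nonempty := ⟨[], trivial⟩
  closed := fun _ _ _ _ => trivial
  stem := []
  stem_mem := trivial
  stem_comparable := fun t _ => Or.inl t.nil_prefix
  stem_longest := stem_longest_of (by simp) (fun t _ => Or.inl t.nil_prefix)
  succ_cofinite := fun t _ _ => by simp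

/-- The subtree of `T` at a node `t` extending the stem. -/
def subtreeAt (T : Hechler) (t : List ℕ) (ht : t ∈ T.tree) (hst : T.stem <+: t) : Hechler where
  tree := {u ∈ T.tree | u <+: t ∨ t <+: u}
  nonempty := ⟨t, ht, Or.inl (List.prefix_refl t)⟩
  closed := by
    rintro s u hsu ⟨huT, hu⟩
    refine ⟨T.closed hsu huT, ?_⟩
    rcases hu with hu | hu
    · exact Or.inl (hsu.trans hu)
    · exact List.prefix_or_prefix_of_prefix hsu hu
  stem := t
  stem_mem := ⟨ht, Or.inl (List.prefix_refl t)⟩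
  stem_comparable := fun u hu => hu.2.symm
  stem_longest := by
    apply stem_longest_of
    · apply Set.Finite.subset (T.succ_cofinite t ht hst)
      intro z hz
      simp only [Set.mem_setOf_eq] at hz ⊢
      intro hmem
      exact hz ⟨hmem, Or.inr (List.prefix_append t [z])⟩
    · intro u hu
      exact hu.2.symm
  succ_cofinite := by
    intro u hu htu
    apply Set.Finite.subset (T.succ_cofinite u hu.1 (hst.trans htu))
    intro z hz
    simp only [Set.mem_setOf_eq] at hz ⊢
    intro hmem
    exact hz ⟨hmem, Or.inr (htu.trans (List.prefix_append u [z]))⟩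

lemma subtreeAt_stem (T : Hechler) (t : List ℕ) (ht : t ∈ T.tree) (hst : T.stem <+: t) :
    (subtreeAt T t ht hst).stem = t := rfl

lemma subtreeAt_sub (T : Hechler) (t : List ℕ) (ht : t ∈ T.tree) (hst : T.stem <+: t) :
    (subtreeAt T t ht hst).tree ⊆ T.tree := fun _ h => h.1

/-- The meet of two conditions with the same stem. -/
def meetAt (T1 T2 : Hechler) (h : T1.stem = T2.stem) : Hechler where
  tree := T1.tree ∩ T2.tree
  nonempty := ⟨T1.stem, T1.stem_mem, h ▸ T2.stem_mem⟩
  closed := fun _ _ hsu hu => ⟨T1.closed hsu hu.1, T2.closed hsu hu.2⟩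
  stem := T1.stem
  stem_mem := ⟨T1.stem_mem, h ▸ T2.stem_mem⟩
  stem_comparable := fun u hu => T1.stem_comparable u hu.1
  stem_longest := by
    apply stem_longest_of
    · apply Set.Finite.subset
        ((T1.succ_cofinite T1.stem T1.stem_mem (List.prefix_refl _)).union
         (T2.succ_cofinite T2.stem T2.stem_mem (List.prefix_refl _)))
      intro z hz
      simp only [Set.mem_setOf_eq, Set.mem_union] at hz ⊢
      by_contra hcon
      push_neg at hcon
      exact hz ⟨hcon.1, h ▸ hcon.2⟩
    · intro u hu
      exact T1.stem_comparable u hu.1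
  succ_cofinite := by
    intro u hu htu
    apply Set.Finite.subset
      ((T1.succ_cofinite u hu.1 htu).union (T2.succ_cofinite u hu.2 (h ▸ htu)))
    intro z hz
    simp only [Set.mem_setOf_eq, Set.mem_union] at hz ⊢
    by_contra hcon
    push_neg at hcon
    exact hz ⟨hcon.1, hcon.2⟩

end AuxGCH

/-- The pruned tree: keep only nodes all of whose initial segments strictly above the stem
are non-`S`-reachable. -/
def pruneTree (T : Hechler) (S : Set (List ℕ)) : Set (List ℕ) :=
  {u ∈ T.tree | u <+: T.stem ∨
    (T.stem <+: u ∧ ∀ v, T.stem <+: v → v <+: u → ¬ SReachable S v)}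

lemma pruneTree_pred {T : Hechler} {S : Set (List ℕ)} (h : ¬ SReachable S T.stem)
    {u : List ℕ} (hu : u ∈ pruneTree T S) (hst : T.stem <+: u) :
    ∀ v, T.stem <+: v → v <+: u → ¬ SReachable S v := by
  rcases hu.2 with hc | hc
  · have he : u = T.stem := (hst.eq_of_length (le_antisymm hst.length_le hc.length_le)).symm
    subst he
    intro v hv1 hv2
    have he2 : v = T.stem := hv2.eq_of_length (le_antisymm hv2.length_le hv1.length_le)
    rw [he2]
    exact h
  · exact hc.2

lemma pruneTree_succ {T : Hechler} {S : Set (List ℕ)} (h : ¬ SReachable S T.stem)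
    {u : List ℕ} (hu : u ∈ pruneTree T S) (hst : T.stem <+: u) :
    {z : ℕ | u ++ [z] ∉ pruneTree T S}.Finite := by
  have hreachu : ¬ SReachable S u :=
    pruneTree_pred h hu hst u hst (List.prefix_refl u)
  apply Set.Finite.subset ((T.succ_cofinite u hu.1 hst).union (succ_reach_finite hreachu))
  intro z hz
  simp only [Set.mem_setOf_eq, Set.mem_union] at hz ⊢
  by_contra hcon
  push_neg at hcon
  apply hz
  refine ⟨hcon.1, Or.inr ⟨hst.trans (List.prefix_append u [z]), ?_⟩⟩
  intro v hv1 hv2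
  rcases prefix_snoc_cases hv2 with hv | hv
  · exact pruneTree_pred h hu hst v hv1 hv
  · subst hv; exact hcon.2

/-- The pruned condition below a non-reachable stem. -/
def prune (T : Hechler) (S : Set (List ℕ)) (h : ¬ SReachable S T.stem) : Hechler where
  tree := pruneTree T S
  nonempty := ⟨T.stem, T.stem_mem, Or.inl (List.prefix_refl _)⟩
  closed := by
    rintro s u hsu ⟨huT, hc⟩
    refine ⟨T.closed hsu huT, ?_⟩
    rcases hc with hc | hc
    · exact Or.inl (hsu.trans hc)
    · rcases List.prefix_or_prefix_of_prefix hsu hc.1 with hs | hs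
      · exact Or.inl hs
      · exact Or.inr ⟨hs, fun v hv1 hv2 => hc.2 v hv1 (hv2.trans hsu)⟩
  stem := T.stem
  stem_mem := ⟨T.stem_mem, Or.inl (List.prefix_refl _)⟩
  stem_comparable := by
    rintro u ⟨huT, hc⟩
    rcases hc with hc | hc
    · exact Or.inr hc
    · exact Or.inl hc.1
  stem_longest := by
    apply stem_longest_of
    · exact pruneTree_succ h ⟨T.stem_mem, Or.inl (List.prefix_refl _)⟩ (List.prefix_refl _)
    · rintro u ⟨huT, hc⟩
      rcases hc with hc | hc
      · exact Or.inr hc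
      · exact Or.inl hc.1
  succ_cofinite := fun u hu hst => pruneTree_succ h hu hst

/-- Every stem of a condition is reachable towards the stems of a dense set. -/
lemma stem_reachable {D : Set Hechler} (hd : HDense D) (T : Hechler) :
    SReachable (stems D) T.stem := by
  by_contra h
  obtain ⟨T'', hT''D, hsub⟩ := hd (prune T (stems D) h)
  have hs0 : SReachable (stems D) T''.stem := ⟨0, reachAt_zero.mpr ⟨T'', hT''D, rfl⟩⟩
  have hmem : T''.stem ∈ pruneTree T (stems D) := hsub T''.stem_mem
  rcases hmem.2 with hc | hc
  swap
  · exact pruneTree_pred h hmem hc.1 T''.stem hc.1 (List.prefix_refl _) hs0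
  -- T''.stem <+: T.stem
  by_cases heq : T''.stem = T.stem
  · rw [heq] at hs0; exact h hs0
  have hlt : T''.stem.length < T.stem.length := by
    rcases lt_or_eq_of_le hc.length_le with h' | h'
    · exact h'
    · exact absurd (hc.eq_of_length h') heq
  -- every immediate successor of T''.stem inside pruneTree is determined
  have hfin : {z : ℕ | T''.stem ++ [z] ∈ T''.tree}.Finite := by
    apply Set.Finite.subset (Set.finite_singleton (T.stem.get ⟨T''.stem.length, hlt⟩))
    intro z hz
    have hzp : T''.stem ++ [z] ∈ pruneTree T (stems D) := hsub hz
    have hzpre : T''.stem ++ [z] <+: T.stem := by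
      rcases hzp.2 with hc' | hc'
      · exact hc'
      · have h6 : T.stem.length = T''.stem.length + 1 := by
          have h7 := hc'.1.length_le
          simp only [List.length_append, List.length_singleton] at h7
          omega
        have h8 : T.stem = T''.stem ++ [z] := hc'.1.eq_of_length (by simp [h6])
        rw [h8]
    have := hzpre.getElem (by simp : T''.stem.length < (T''.stem ++ [z]).length)
    simp only [Set.mem_singleton_iff, List.get_eq_getElem]
    rw [← this]
    simp
  have hcof := T''.succ_cofinite T''.stem T''.stem_mem (List.prefix_refl _)
  have : (Set.univ : Set ℕ).Finite := by
    apply Set.Finite.subset (hfin.union hcof)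
    intro z _
    by_cases hz : T''.stem ++ [z] ∈ T''.tree
    · exact Or.inl hz
    · exact Or.inr hz
  exact Set.infinite_univ this

/-- Descend to a stem in `S` inside the tree while avoiding `A`. -/
lemma descend {S : Set (List ℕ)} {A : Set ℕ}
    (hst : ∀ (t : List ℕ) (α : Ordinal.{0}),
      {z : ℕ | ∃ β : Ordinal.{0}, ∃ _ : β < α, ReachAt S β (t ++ [z])}.Infinite →
      ({z : ℕ | ∃ β : Ordinal.{0}, ∃ _ : β < α, ReachAt S β (t ++ [z])} \ A).Infinite) :
    ∀ (α : Ordinal.{0}) (t : List ℕ) (T : Hechler), ReachAt S α t → t ∈ T.tree →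
      T.stem <+: t → ∃ t', t' ∈ S ∧ t' ∈ T.tree ∧ ExtOutside A t t' := by
  intro α
  induction α using Ordinal.induction with
  | h α IH =>
    intro t T hr ht hstem
    by_cases hα : α = 0
    · subst hα
      exact ⟨t, reachAt_zero.mp hr, ht, extOutside_refl A t⟩
    · rw [reachAt_pos hα] at hr
      have h2 := hst t α hr
      have h3 := T.succ_cofinite t ht hstem
      obtain ⟨z, hz⟩ := (h2.diff h3).nonempty
      simp only [Set.mem_diff, Set.mem_setOf_eq, not_not] at hz
      obtain ⟨⟨⟨β, hβ, hrβ⟩, hzA⟩, hzT⟩ := hz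
      obtain ⟨t', ht'S, ht'T, ht'o⟩ :=
        IH β hβ (t ++ [z]) T hrβ hzT (hstem.trans (List.prefix_append t [z]))
      exact ⟨t', ht'S, ht'T, extOutside_trans (extOutside_snoc t hzA) ht'o⟩

open Classical in
/-- One step of the construction: extend into `D` taking exactly one new value in `A`,
whose `A`-index has the right `θ`-value. -/
lemma stepLemma (θ : ℕ → ℕ) (hθfib : ∀ m : ℕ, {k : ℕ | θ k = m}.Infinite)
    {D : Set Hechler} (hop : HOpen D) (hd : HDense D)
    {A : Set ℕ} (hA : A.Infinite)
    (hst : ∀ (t : List ℕ) (α : Ordinal.{0}),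
      {z : ℕ | ∃ β : Ordinal.{0}, ∃ _ : β < α, ReachAt (stems D) β (t ++ [z])}.Infinite →
      ({z : ℕ | ∃ β : Ordinal.{0}, ∃ _ : β < α, ReachAt (stems D) β (t ++ [z])} \ A).Infinite)
    (m : ℕ) (T : Hechler) :
    ∃ (T' : Hechler) (a : ℕ), T' ∈ D ∧ T'.tree ⊆ T.tree ∧ a ∈ A ∧
      θ (Nat.count (· ∈ A) a) = m ∧ (T.stem ++ [a]) <+: T'.stem ∧
      ExtOutside A (T.stem ++ [a]) T'.stem := by
  have hA' : (setOf (· ∈ A)).Infinite := hA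
  have hgood : {a : ℕ | a ∈ A ∧ θ (Nat.count (· ∈ A) a) = m}.Infinite := by
    have himg := (hθfib m).image
      (Set.injOn_of_injective (Nat.nth_injective hA'))
    apply himg.mono
    rintro b ⟨k, hk, rfl⟩
    refine ⟨Nat.nth_mem_of_infinite hA' k, ?_⟩
    rw [Nat.count_nth_of_infinite hA' k]
    exact hk
  have h3 := T.succ_cofinite T.stem T.stem_mem (List.prefix_refl _)
  obtain ⟨a, ha⟩ := (hgood.diff h3).nonempty
  simp only [Set.mem_diff, Set.mem_setOf_eq, not_not] at ha
  obtain ⟨⟨haA, hacnt⟩, haT⟩ := ha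
  have ht0T : T.stem ++ [a] ∈ T.tree := haT
  have hpre0 : T.stem <+: T.stem ++ [a] := List.prefix_append _ _
  obtain ⟨α, hα⟩ := stem_reachable hd (subtreeAt T (T.stem ++ [a]) ht0T hpre0)
  obtain ⟨t', ht'S, ht'T0, ht'o⟩ := descend hst α (T.stem ++ [a])
    (subtreeAt T (T.stem ++ [a]) ht0T hpre0) hα
    (subtreeAt T (T.stem ++ [a]) ht0T hpre0).stem_mem (List.prefix_refl _)
  obtain ⟨T'', hT''D, hT''stem⟩ := ht'S
  have hpre1 : (T.stem ++ [a]) <+: t' := ht'o.1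
  have hstemeq : T''.stem = (subtreeAt (subtreeAt T (T.stem ++ [a]) ht0T hpre0)
      t' ht'T0 hpre1).stem := hT''stem
  refine ⟨meetAt T'' _ hstemeq, a,
    hop T'' _ Set.inter_subset_left hT''D, ?_, haA, hacnt, ?_, ?_⟩
  · intro u hu
    exact (subtreeAt_sub _ _ _ _) ((subtreeAt_sub _ _ _ _) hu.2)
  · show (T.stem ++ [a]) <+: T''.stem
    rw [hT''stem]
    exact hpre1
  · show ExtOutside A (T.stem ++ [a]) T''.stem
    rw [hT''stem]
    exact ht'o

lemma count_flat (p : ℕ → Prop) [DecidablePred p] :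
    ∀ (d a : ℕ), (∀ k, a ≤ k → k < a + d → ¬ p k) → Nat.count p (a + d) = Nat.count p a := by
  intro d
  induction d with
  | zero => intro a _; rfl
  | succ d IH =>
    intro a hnp
    have he : a + (d + 1) = (a + d) + 1 := by omega
    rw [he, Nat.count_succ, if_neg (hnp (a + d) (by omega) (by omega))]
    have := IH a (fun k hk1 hk2 => hnp k hk1 (by omega))
    omega

/-- **Generic Coding with Help**, encoding form. -/
theorem generic_coding_with_help_encoded
    (θ : ℕ → ℕ) (hθ : Computable θ) (hθfib : ∀ m : ℕ, {k : ℕ | θ k = m}.Infinite)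
    (D : ℕ → Set Hechler)
    (hDopen : ∀ i, HOpen (D i)) (hDdense : ∀ i, HDense (D i))
    (A : Set ℕ) (hA : A.Infinite)
    (hstick : ∀ (i : ℕ) (t : List ℕ) (α : Ordinal.{0}),
      {z : ℕ | ∃ β : Ordinal.{0}, ∃ _ : β < α,
        ReachAt (stems (D i)) β (t ++ [z])}.Infinite →
      ({z : ℕ | ∃ β : Ordinal.{0}, ∃ _ : β < α,
        ReachAt (stems (D i)) β (t ++ [z])} \ A).Infinite)
    (x : ℕ → ℕ) :
    ∃ T : ℕ → Hechler,
      (∀ i, (T (i + 1)).tree ⊆ (T i).tree) ∧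
      (∀ i, T i ∈ D i) ∧
      ∃ g : ℕ → ℕ, stemsUnion T g ∧
        {n : ℕ | g n ∈ A}.Infinite ∧
        encodedReal θ A g = x := by
  classical
  have key : ∀ (i : ℕ) (T : Hechler), ∃ (T' : Hechler) (a : ℕ), T' ∈ D i ∧
      T'.tree ⊆ T.tree ∧ a ∈ A ∧ θ (Nat.count (· ∈ A) a) = x i ∧
      (T.stem ++ [a]) <+: T'.stem ∧ ExtOutside A (T.stem ++ [a]) T'.stem :=
    fun i T => stepLemma θ hθfib (hDopen i) (hDdense i) hA (hstick i) (x i) T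
  choose F a hFD hFsub haA hacnt hFpre hFout using key
  let T : ℕ → Hechler := fun i => Nat.rec (F 0 fullT) (fun n Tn => F (n + 1) Tn) i
  let Tp : ℕ → Hechler := fun i => Nat.rec fullT (fun n _ => T n) i
  have hTeq : ∀ i, T i = F i (Tp i) := fun i => by cases i <;> rfl
  let b : ℕ → ℕ := fun i => a i (Tp i)
  have hD : ∀ i, T i ∈ D i := fun i => by rw [hTeq i]; exact hFD i (Tp i)
  have hsub : ∀ i, (T (i + 1)).tree ⊆ (T i).tree := fun i => hFsub (i + 1) (T i)
  have hbA : ∀ i, b i ∈ A := fun i => haA i (Tp i)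
  have hbc : ∀ i, θ (Nat.count (· ∈ A) (b i)) = x i := fun i => hacnt i (Tp i)
  have hpre : ∀ i, ((Tp i).stem ++ [b i]) <+: (T i).stem := fun i => by
    rw [hTeq i]; exact hFpre i (Tp i)
  have hout : ∀ i, ExtOutside A ((Tp i).stem ++ [b i]) (T i).stem := fun i => by
    rw [hTeq i]; exact hFout i (Tp i)
  have hchain : ∀ i, (T i).stem <+: (T (i + 1)).stem := fun i =>
    (List.prefix_append (T i).stem [b (i + 1)]).trans (hpre (i + 1))
  have hmono : ∀ i j, i ≤ j → (T i).stem <+: (T j).stem := by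
    intro i j hij
    induction j with
    | zero =>
      have : i = 0 := Nat.le_zero.mp hij
      subst this; exact List.prefix_refl _
    | succ j IH =>
      rcases eq_or_lt_of_le hij with rfl | h
      · exact List.prefix_refl _
      · exact (IH (Nat.lt_succ_iff.mp h)).trans (hchain j)
  have hLlt : ∀ i, (T i).stem.length < (T (i + 1)).stem.length := by
    intro i
    have h1 := (hpre (i + 1)).length_le
    simp only [List.length_append, List.length_singleton] at h1
    have h2 : (Tp (i + 1)).stem = (T i).stem := rfl
    rw [h2] at h1
    omega
  have hLi : ∀ i, i < (T i).stem.length := by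
    intro i
    induction i with
    | zero =>
      have h1 := (hpre 0).length_le
      simp only [List.length_append, List.length_singleton] at h1
      have h2 : (Tp 0).stem = [] := rfl
      rw [h2] at h1
      simp only [List.length_nil] at h1
      omega
    | succ i IH =>
      have := hLlt i
      omega
  let g : ℕ → ℕ := fun n => ((T n).stem).get ⟨n, hLi n⟩
  have hg : ∀ (i n : ℕ) (h : n < (T i).stem.length), ((T i).stem).get ⟨n, h⟩ = g n := by
    intro i n h
    show ((T i).stem).get ⟨n, h⟩ = ((T n).stem).get ⟨n, hLi n⟩
    simp only [List.get_eq_getElem]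
    rcases le_total i n with hin | hin
    · exact (hmono i n hin).getElem h
    · exact ((hmono n i hin).getElem (hLi n)).symm
  let P : ℕ → ℕ := fun i => (Tp i).stem.length
  have hPlt : ∀ i, P i < (T i).stem.length := by
    intro i
    cases i with
    | zero => exact hLi 0
    | succ i => exact hLlt i
  have hPmono : StrictMono P := by
    apply strictMono_nat_of_lt_succ
    intro i
    exact hPlt i
  have hgP : ∀ i, g (P i) = b i := by
    intro i
    have hPd : P i = (Tp i).stem.length := rfl
    have h1 : P i < ((Tp i).stem ++ [b i]).length := by
      simp only [List.length_append, List.length_singleton]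
      omega
    have h2 := (hpre i).getElem h1
    have h3 : ((Tp i).stem ++ [b i])[(P i)]'h1 = b i := by
      show ((Tp i).stem ++ [b i])[((Tp i).stem.length)]'h1 = b i
      simp
    rw [← hg i (P i) (hPlt i)]
    simp only [List.get_eq_getElem]
    rw [← h2, h3]
  have hnotA : ∀ i n, P i < n → ∀ (h : n < (T i).stem.length), g n ∉ A := by
    intro i n hn h
    have hPd : P i = (Tp i).stem.length := rfl
    have h1 := (hout i).2 n h (by
      simp only [List.length_append, List.length_singleton]
      omega)
    rwa [hg i n h] at h1
  have hchar : ∀ i n, n < (T i).stem.length → g n ∈ A → ∃ j, P j = n := by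
    intro i
    induction i with
    | zero =>
      intro n hn hA'
      rcases Nat.eq_zero_or_pos n with rfl | hp
      · exact ⟨0, rfl⟩
      · exact absurd hA' (hnotA 0 n hp hn)
    | succ i IH =>
      intro n hn hA'
      rcases lt_trichotomy n ((T i).stem.length) with h | h | h
      · exact IH n h hA'
      · exact ⟨i + 1, h.symm⟩
      · exact absurd hA' (hnotA (i + 1) n h hn)
  have hinfA : {n : ℕ | g n ∈ A}.Infinite := by
    have hr : Set.range P ⊆ {n | g n ∈ A} := by
      rintro _ ⟨j, rfl⟩
      show g (P j) ∈ A
      rw [hgP j]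
      exact hbA j
    exact (Set.infinite_range_of_injective hPmono.injective).mono hr
  have hcnt : ∀ i, Nat.count (fun n => g n ∈ A) (P i) = i := by
    intro i
    induction i with
    | zero => exact Nat.count_zero _
    | succ i IH =>
      have hP1 : P (i + 1) = (T i).stem.length := rfl
      have h1 : P i + 1 + ((T i).stem.length - (P i + 1)) = P (i + 1) := by
        have h2 := hPlt i
        rw [hP1]
        omega
      have hflat : ∀ k, P i + 1 ≤ k →
          k < P i + 1 + ((T i).stem.length - (P i + 1)) → ¬ g k ∈ A := by
        intro k hk1 hk2 hgk
        have hki : k < (T i).stem.length := by omega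
        obtain ⟨j, hj⟩ := hchar i k hki hgk
        rcases le_or_gt j i with hji | hji
        · have := hPmono.monotone hji
          omega
        · have : P (i + 1) ≤ P j := hPmono.monotone hji
          rw [hP1] at this
          omega
      have h3 := count_flat (fun n => g n ∈ A) ((T i).stem.length - (P i + 1)) (P i + 1) hflat
      rw [← h1, h3, Nat.count_succ, if_pos (by rw [hgP i]; exact hbA i), IH]
  have hnth : ∀ i, Nat.nth (fun n => g n ∈ A) i = P i := by
    intro i
    have h1 : g (P i) ∈ A := by rw [hgP i]; exact hbA i
    have h2 := Nat.nth_count (p := fun n => g n ∈ A) h1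
    rw [hcnt i] at h2
    exact h2
  refine ⟨T, hsub, hD, g, ⟨?_, fun n => ⟨n, hLi n⟩⟩, hinfA, ?_⟩
  · intro i k h
    exact hg i k h
  · funext i
    simp only [encodedReal]
    rw [hnth i, hgP i]
    exact hbc i

end GCH
end

section
/- For every a : ℕ → ℕ there exists an infinite set A ⊆ ℕ such that A ≡_T a (i.e. the characteristic function of A and a are mutually Turing reducible) and A is computable from every infinite subset of itself: for every infinite B ⊆ A, the characteristic function of A is Turing reducible to the characteristic function of B. -/
namespace GCH

/-! ### auxiliary combinators -/

theorem RecursiveIn.of_partrec {O f} (h : Nat.Partrec f) : RecursiveIn O f := by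
  induction h with
  | zero => exact .zero
  | succ => exact .succ
  | left => exact .left
  | right => exact .right
  | pair _ _ ih1 ih2 => exact .pair ih1 ih2
  | comp _ _ ih1 ih2 => exact .comp ih1 ih2
  | prec _ _ ih1 ih2 => exact .prec ih1 ih2
  | rfind _ ih => exact .rfind ih

theorem RecursiveIn.of_computable {O} {f : ℕ → ℕ} (h : Computable f) :
    RecursiveIn O ↑f := of_partrec (Partrec.nat_iff.mp h)

theorem RecursiveIn.of_eq {O} {f g : ℕ →. ℕ} (h : RecursiveIn O f) (e : ∀ n, f n = g n) :
    RecursiveIn O g := (funext e : f = g) ▸ h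

theorem RecursiveIn.total_of_eq {O} {f g : ℕ → ℕ} (h : RecursiveIn O ↑f)
    (e : ∀ n, f n = g n) : RecursiveIn O ↑g := by
  have : f = g := funext e
  exact this ▸ h

theorem RecursiveIn.totalComp {O} {h g : ℕ → ℕ} (hh : RecursiveIn O ↑h)
    (hg : RecursiveIn O ↑g) : RecursiveIn O ↑(fun n => h (g n)) :=
  (RecursiveIn.comp hh hg).of_eq fun n => by show Part.bind _ _ = _; exact Part.bind_some _ _

theorem RecursiveIn.totalPair {O} {f g : ℕ → ℕ} (hf : RecursiveIn O ↑f)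
    (hg : RecursiveIn O ↑g) : RecursiveIn O ↑(fun n => Nat.pair (f n) (g n)) :=
  (RecursiveIn.pair hf hg).of_eq fun n => by simp [PFun.coe_val, Seq.seq]

theorem RecursiveIn.prec_total {O} {b s : ℕ → ℕ} (hb : RecursiveIn O ↑b)
    (hs : RecursiveIn O ↑s) :
    RecursiveIn O ↑(Nat.unpaired fun a n =>
      Nat.rec (motive := fun _ => ℕ) (b a)
        (fun y ih => s (Nat.pair a (Nat.pair y ih))) n) := by
  refine (RecursiveIn.prec hb hs).of_eq fun n => ?_
  simp only [Nat.unpaired, PFun.coe_val, Part.bind_eq_bind]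
  induction n.unpair.2 with
  | zero => rfl
  | succ k ih =>
      show (Nat.rec (motive := fun _ => Part ℕ) (Part.some (b (Nat.unpair n).1))
        (fun y IH => IH.bind fun i => Part.some (s (Nat.pair (Nat.unpair n).1 (Nat.pair y i)))) k).bind
          (fun i => Part.some (s (Nat.pair (Nat.unpair n).1 (Nat.pair k i))))
        = Part.some (Nat.rec (motive := fun _ => ℕ) (b (Nat.unpair n).1)
            (fun y ih => s (Nat.pair (Nat.unpair n).1 (Nat.pair y ih))) (k+1))
      rw [ih]
      simp

theorem RecursiveIn.rfind_total {O} {p : ℕ → ℕ}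
    (hp : RecursiveIn O ↑p) (h : ∀ a, ∃ n, p (Nat.pair a n) = 0) :
    RecursiveIn O ↑(fun a => Nat.find (h a)) := by
  refine (RecursiveIn.rfind hp).of_eq fun a => ?_
  have h1 : (↑(fun a => Nat.find (h a)) : ℕ →. ℕ) a = Part.some (Nat.find (h a)) := rfl
  rw [h1]
  apply Part.eq_some_iff.mpr
  refine Nat.mem_rfind.mpr ?_
  constructor
  · simpa [PFun.coe_val] using Nat.find_spec (h a)
  · intro m hm
    simpa [PFun.coe_val] using Nat.find_min (h a) hm

/-! ### the set A -/

def fenc (a : ℕ → ℕ) : ℕ → ℕ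
  | 0 => 0
  | n + 1 => Nat.pair (fenc a n) (a n) + 1

def stp (c : ℕ) : ℕ := (c - 1).unpair.1

theorem fenc_strictMono (a : ℕ → ℕ) : StrictMono (fenc a) := by
  apply strictMono_nat_of_lt_succ
  intro n
  have := Nat.left_le_pair (fenc a n) (a n)
  simp only [fenc]
  omega

theorem fenc_ge (a : ℕ → ℕ) (n : ℕ) : n ≤ fenc a n :=
  (fenc_strictMono a).le_apply

theorem stp_fenc (a : ℕ → ℕ) (n : ℕ) : stp (fenc a n) = fenc a (n - 1) := by
  cases n with
  | zero => simp [fenc, stp]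
  | succ k => simp [fenc, stp, Nat.unpair_pair]

theorem stp_iter (a : ℕ → ℕ) (j n : ℕ) : stp^[j] (fenc a n) = fenc a (n - j) := by
  induction j with
  | zero => simp
  | succ k ih =>
      rw [Function.iterate_succ_apply', ih, stp_fenc]
      congr 1

/-! ### the decision function G -/

def Gaux (m e : ℕ) : ℕ → ℕ
  | 0 => if e = m then 1 else 0
  | j + 1 => max (Gaux m e j) (if stp^[j + 1] e = m then 1 else 0)

def G (p : ℕ) : ℕ := Gaux p.unpair.1 p.unpair.2 p.unpair.2

theorem Gaux_eq (m e J : ℕ) :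
    Gaux m e J = if ∃ j ≤ J, stp^[j] e = m then 1 else 0 := by
  induction J with
  | zero =>
      simp only [Gaux]
      congr 1
      simp [Nat.le_zero, eq_comm]
  | succ k ih =>
      rw [Gaux, ih]
      by_cases hP : ∃ j ≤ k, stp^[j] e = m
      · have hex : ∃ j ≤ k + 1, stp^[j] e = m :=
          ⟨hP.choose, le_trans hP.choose_spec.1 (Nat.le_succ k), hP.choose_spec.2⟩
        rw [if_pos hP, if_pos hex]
        have hle : (if stp^[k + 1] e = m then 1 else 0) ≤ 1 := by split <;> simp
        exact max_eq_left hle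
      · rw [if_neg hP, max_eq_right (Nat.zero_le _)]
        by_cases hQ : stp^[k + 1] e = m
        · rw [if_pos hQ, if_pos ⟨k + 1, le_refl _, hQ⟩]
        · rw [if_neg hQ, if_neg ?_]
          rintro ⟨j, hj, hj2⟩
          rcases Nat.le_succ_iff.mp hj with h | h
          · exact hP ⟨j, h, hj2⟩
          · exact hQ (by rwa [h] at hj2)

theorem primrec_stp : Primrec stp :=
  Primrec.fst.comp (Primrec.unpair.comp Primrec.pred)

theorem primrec_G : Primrec G := by
  have hfst : Primrec (fun p : ℕ => p.unpair.1) := Primrec.fst.comp Primrec.unpair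
  have hsnd : Primrec (fun p : ℕ => p.unpair.2) := Primrec.snd.comp Primrec.unpair
  have hbase : Primrec (fun p : ℕ => if p.unpair.2 = p.unpair.1 then 1 else 0) :=
    Primrec.ite (Primrec.eq.comp hsnd hfst) (Primrec.const 1) (Primrec.const 0)
  have hiter : Primrec (fun x : ℕ × (ℕ × ℕ) => stp^[x.2.1 + 1] x.1.unpair.2) :=
    Primrec.nat_iterate (Primrec.succ.comp (Primrec.fst.comp Primrec.snd))
      (Primrec.snd.comp (Primrec.unpair.comp Primrec.fst))
      (Primrec.to₂ (primrec_stp.comp Primrec.snd))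
  have hite : Primrec (fun x : ℕ × (ℕ × ℕ) =>
      if stp^[x.2.1 + 1] x.1.unpair.2 = x.1.unpair.1 then 1 else 0) :=
    Primrec.ite (Primrec.eq.comp hiter (hfst.comp Primrec.fst))
      (Primrec.const 1) (Primrec.const 0)
  have hstep : Primrec₂ (fun (p : ℕ) (q : ℕ × ℕ) =>
      max q.2 (if stp^[q.1 + 1] p.unpair.2 = p.unpair.1 then 1 else 0)) :=
    Primrec.to₂ (Primrec.nat_max.comp (Primrec.snd.comp Primrec.snd) hite)
  have hrec := Primrec.nat_rec' hsnd hbase hstep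
  refine hrec.of_eq fun p => ?_
  have key : ∀ J, Gaux p.unpair.1 p.unpair.2 J
      = Nat.rec (motive := fun _ => ℕ) (if p.unpair.2 = p.unpair.1 then 1 else 0)
        (fun n IH => max IH (if stp^[n + 1] p.unpair.2 = p.unpair.1 then 1 else 0)) J := by
    intro J
    induction J with
    | zero => rfl
    | succ k ih =>
        rw [Gaux, ih]
  exact (key p.unpair.2).symm

theorem computable_G : Computable G := primrec_G.to_comp


theorem natrec_succ {C : Type} (b : C) (s : ℕ → C → C) (k : ℕ) :
    Nat.rec (motive := fun _ => C) b s (k + 1) = s k (Nat.rec (motive := fun _ => C) b s k) := rfl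

/-! ### correctness of G -/

theorem chi_one_iff (A : Set ℕ) (n : ℕ) : chi A n = 1 ↔ n ∈ A := by
  by_cases h : n ∈ A <;> simp [chi, h]

theorem chi_eq_G (a : ℕ → ℕ) (m e : ℕ) (he : e ∈ Set.range (fenc a)) (hme : m ≤ e) :
    chi (Set.range (fenc a)) m = G (Nat.pair m e) := by
  obtain ⟨n, rfl⟩ := he
  have hG : G (Nat.pair m (fenc a n))
      = if ∃ j ≤ fenc a n, stp^[j] (fenc a n) = m then 1 else 0 := by
    rw [G, Nat.unpair_pair]
    exact Gaux_eq _ _ _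
  by_cases hm : m ∈ Set.range (fenc a)
  · obtain ⟨k, rfl⟩ := hm
    have hkn : k ≤ n := (fenc_strictMono a).le_iff_le.mp hme
    have hex : ∃ j ≤ fenc a n, stp^[j] (fenc a n) = fenc a k := by
      refine ⟨n - k, le_trans (Nat.sub_le n k) (fenc_ge a n), ?_⟩
      rw [stp_iter]
      congr 1
      omega
    rw [hG, if_pos hex]
    simp [chi]
  · have hnex : ¬ ∃ j ≤ fenc a n, stp^[j] (fenc a n) = m := by
      rintro ⟨j, _, hj⟩
      rw [stp_iter] at hj
      exact hm ⟨n - j, hj⟩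
    rw [hG, if_neg hnex]
    simp [chi, hm]

/-! ### reduction 1 : chi A ≤_T a -/

theorem fenc_recIn (a : ℕ → ℕ) : RecursiveIn ↑a ↑(fenc a) := by
  have h1 : RecursiveIn (↑a : ℕ →. ℕ) ↑(fun q : ℕ => q.unpair.2.unpair.2) :=
    .of_computable ((Primrec.snd.comp (Primrec.unpair.comp
      (Primrec.snd.comp Primrec.unpair))).to_comp)
  have h2 : RecursiveIn (↑a : ℕ →. ℕ) ↑(fun q : ℕ => a q.unpair.2.unpair.1) :=
    RecursiveIn.totalComp .oracle (.of_computable ((Primrec.fst.comp (Primrec.unpair.comp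
      (Primrec.snd.comp Primrec.unpair))).to_comp))
  have hs : RecursiveIn (↑a : ℕ →. ℕ)
      ↑(fun q : ℕ => Nat.succ (Nat.pair q.unpair.2.unpair.2 (a q.unpair.2.unpair.1))) :=
    RecursiveIn.totalComp (.of_computable Computable.succ) (RecursiveIn.totalPair h1 h2)
  have hb : RecursiveIn (↑a : ℕ →. ℕ) ↑(fun _ : ℕ => 0) :=
    .of_computable (Computable.const 0)
  have hrec := RecursiveIn.prec_total hb hs
  have hcomp := RecursiveIn.totalComp hrec
    (.of_computable ((Primrec₂.natPair.comp (Primrec.const 0) Primrec.id).to_comp))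
  refine hcomp.total_of_eq fun n => ?_
  induction n with
  | zero => simp [Nat.unpaired, Nat.unpair_pair, fenc]
  | succ k ih =>
      simp only [Nat.unpaired, Nat.unpair_pair, id_eq] at ih ⊢
      rw [fenc, ih]

theorem red1 (a : ℕ → ℕ) : RecursiveIn ↑a ↑(chi (Set.range (fenc a))) := by
  have hpair : RecursiveIn (↑a : ℕ →. ℕ) ↑(fun m : ℕ => Nat.pair m (fenc a m)) :=
    RecursiveIn.totalPair (.of_computable Computable.id) (fenc_recIn a)
  have := RecursiveIn.totalComp (.of_computable computable_G) hpair
  refine this.total_of_eq fun m => ?_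
  exact (chi_eq_G a m (fenc a m) ⟨m, rfl⟩ (fenc_ge a m)).symm

/-! ### reduction 2 : a ≤_T chi A -/

theorem red2 (a : ℕ → ℕ) : RecursiveIn ↑(chi (Set.range (fenc a))) ↑a := by
  set A := Set.range (fenc a) with hA
  set O : ℕ →. ℕ := ↑(chi A) with hO
  -- the search function
  set p2 : ℕ → ℕ := fun q =>
    (if q.unpair.1 < q.unpair.2 then 0 else 1) + (1 - chi A q.unpair.2) with hp2
  have hp2rec : RecursiveIn O ↑p2 := by
    have hinner : RecursiveIn O ↑(fun q : ℕ => Nat.pair q (chi A q.unpair.2)) :=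
      RecursiveIn.totalPair (.of_computable Computable.id)
        (RecursiveIn.totalComp .oracle
          (.of_computable ((Primrec.snd.comp Primrec.unpair).to_comp)))
    have hC : Computable (fun r : ℕ =>
        (if r.unpair.1.unpair.1 < r.unpair.1.unpair.2 then 0 else 1) + (1 - r.unpair.2)) := by
      have u1 : Primrec (fun r : ℕ => r.unpair.1.unpair.1) :=
        Primrec.fst.comp (Primrec.unpair.comp (Primrec.fst.comp Primrec.unpair))
      have u2 : Primrec (fun r : ℕ => r.unpair.1.unpair.2) :=
        Primrec.snd.comp (Primrec.unpair.comp (Primrec.fst.comp Primrec.unpair))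
      have u3 : Primrec (fun r : ℕ => r.unpair.2) := Primrec.snd.comp Primrec.unpair
      exact (Primrec.nat_add.comp
        (Primrec.ite (Primrec.nat_lt.comp u1 u2) (Primrec.const 0) (Primrec.const 1))
        (Primrec.nat_sub.comp (Primrec.const 1) u3)).to_comp
    have := RecursiveIn.totalComp (.of_computable hC) hinner
    refine this.total_of_eq fun q => ?_
    simp [Nat.unpair_pair, hp2]
  have hp2zero : ∀ x t : ℕ, p2 (Nat.pair x t) = 0 ↔ x < t ∧ t ∈ A := by
    intro x t
    rw [hp2]
    simp only [Nat.unpair_pair]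
    by_cases ht : t ∈ A
    · have h1 : chi A t = 1 := (chi_one_iff A t).mpr ht
      by_cases hx : x < t <;> simp [h1, hx, ht]
    · have h0 : chi A t = 0 := by simp [chi, ht]
      by_cases hx : x < t <;> simp [h0, hx, ht]
  have hex : ∀ x : ℕ, ∃ t, p2 (Nat.pair x t) = 0 := by
    intro x
    refine ⟨fenc a (x + 1), (hp2zero _ _).mpr ⟨?_, ⟨x + 1, rfl⟩⟩⟩
    have := fenc_ge a (x + 1)
    omega
  have hnxt : RecursiveIn O ↑(fun x => Nat.find (hex x)) :=
    RecursiveIn.rfind_total hp2rec hex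
  -- nxt at fenc values
  have hnxt_val : ∀ n : ℕ, Nat.find (hex (fenc a n)) = fenc a (n + 1) := by
    intro n
    rw [Nat.find_eq_iff]
    constructor
    · exact (hp2zero _ _).mpr ⟨(fenc_strictMono a) (Nat.lt_succ_self n), ⟨n + 1, rfl⟩⟩
    · intro t ht hp0
      obtain ⟨hlt, k, hk⟩ := (hp2zero _ _).mp hp0
      subst hk
      have h1 : n < k := (fenc_strictMono a).lt_iff_lt.mp hlt
      have h2 : k < n + 1 := (fenc_strictMono a).lt_iff_lt.mp ht
      omega
  -- iterate to get fenc
  have hs : RecursiveIn O ↑(fun q : ℕ => Nat.find (hex q.unpair.2.unpair.2)) :=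
    RecursiveIn.totalComp hnxt (.of_computable ((Primrec.snd.comp (Primrec.unpair.comp
      (Primrec.snd.comp Primrec.unpair))).to_comp))
  have hb : RecursiveIn O ↑(fun _ : ℕ => 0) := .of_computable (Computable.const 0)
  have hrec := RecursiveIn.prec_total hb hs
  have hcomp := RecursiveIn.totalComp hrec
    (.of_computable ((Primrec₂.natPair.comp (Primrec.const 0) Primrec.id).to_comp))
  have hfenc : RecursiveIn O ↑(fenc a) := by
    refine hcomp.total_of_eq fun n => ?_
    induction n with
    | zero => simp [Nat.unpaired, Nat.unpair_pair, fenc]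
    | succ k ih =>
        simp only [Nat.unpaired, Nat.unpair_pair, id_eq] at ih ⊢
        rw [ih]
        exact hnxt_val k
  -- extract a
  have hnext : RecursiveIn O ↑(fun n => fenc a (n + 1)) :=
    RecursiveIn.totalComp hfenc (.of_computable Computable.succ)
  have := RecursiveIn.totalComp
    (.of_computable (((Primrec.snd.comp (Primrec.unpair.comp Primrec.pred))).to_comp)) hnext
  refine this.total_of_eq fun n => ?_
  show (fenc a (n + 1) - 1).unpair.2 = a n
  rw [fenc]
  simp [Nat.unpair_pair]

/-! ### reduction 3 : chi A ≤_T chi B for infinite B ⊆ A -/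

theorem red3 (a : ℕ → ℕ) (B : Set ℕ) (hBA : B ⊆ Set.range (fenc a))
    (hBinf : B.Infinite) :
    RecursiveIn ↑(chi B) ↑(chi (Set.range (fenc a))) := by
  set A := Set.range (fenc a) with hA
  set O : ℕ →. ℕ := ↑(chi B) with hO
  set p3 : ℕ → ℕ := fun q =>
    (if q.unpair.1 ≤ q.unpair.2 then 0 else 1) + (1 - chi B q.unpair.2) with hp3
  have hp3rec : RecursiveIn O ↑p3 := by
    have hinner : RecursiveIn O ↑(fun q : ℕ => Nat.pair q (chi B q.unpair.2)) :=
      RecursiveIn.totalPair (.of_computable Computable.id)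
        (RecursiveIn.totalComp .oracle
          (.of_computable ((Primrec.snd.comp Primrec.unpair).to_comp)))
    have hC : Computable (fun r : ℕ =>
        (if r.unpair.1.unpair.1 ≤ r.unpair.1.unpair.2 then 0 else 1) + (1 - r.unpair.2)) := by
      have u1 : Primrec (fun r : ℕ => r.unpair.1.unpair.1) :=
        Primrec.fst.comp (Primrec.unpair.comp (Primrec.fst.comp Primrec.unpair))
      have u2 : Primrec (fun r : ℕ => r.unpair.1.unpair.2) :=
        Primrec.snd.comp (Primrec.unpair.comp (Primrec.fst.comp Primrec.unpair))
      have u3 : Primrec (fun r : ℕ => r.unpair.2) := Primrec.snd.comp Primrec.unpair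
      exact (Primrec.nat_add.comp
        (Primrec.ite (Primrec.nat_le.comp u1 u2) (Primrec.const 0) (Primrec.const 1))
        (Primrec.nat_sub.comp (Primrec.const 1) u3)).to_comp
    have := RecursiveIn.totalComp (.of_computable hC) hinner
    refine this.total_of_eq fun q => ?_
    simp [Nat.unpair_pair, hp3]
  have hp3zero : ∀ x t : ℕ, p3 (Nat.pair x t) = 0 ↔ x ≤ t ∧ t ∈ B := by
    intro x t
    rw [hp3]
    simp only [Nat.unpair_pair]
    by_cases ht : t ∈ B
    · have h1 : chi B t = 1 := (chi_one_iff B t).mpr ht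
      by_cases hx : x ≤ t <;> simp [h1, hx, ht]
    · have h0 : chi B t = 0 := by simp [chi, ht]
      by_cases hx : x ≤ t <;> simp [h0, hx, ht]
  have hex : ∀ x : ℕ, ∃ t, p3 (Nat.pair x t) = 0 := by
    intro x
    obtain ⟨t, htB, hxt⟩ := hBinf.exists_gt x
    exact ⟨t, (hp3zero _ _).mpr ⟨le_of_lt hxt, htB⟩⟩
  have hsrch : RecursiveIn O ↑(fun x => Nat.find (hex x)) :=
    RecursiveIn.rfind_total hp3rec hex
  have hpair : RecursiveIn O ↑(fun m : ℕ => Nat.pair m (Nat.find (hex m))) :=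
    RecursiveIn.totalPair (.of_computable Computable.id) hsrch
  have := RecursiveIn.totalComp (.of_computable computable_G) hpair
  refine this.total_of_eq fun m => ?_
  obtain ⟨hle, hmem⟩ := (hp3zero m (Nat.find (hex m))).mp (Nat.find_spec (hex m))
  exact (chi_eq_G a m (Nat.find (hex m)) (hBA hmem) hle).symm


/-- For every `a : ℕ → ℕ` there is an infinite `A ⊆ ℕ` with `A ≡_T a` which is
computable from every infinite subset of itself. -/
theorem exists_equiv_selfcomputable_set (a : ℕ → ℕ) :
    ∃ A : Set ℕ, A.Infinite ∧
      TuringReducible (chi A) a ∧ TuringReducible a (chi A) ∧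
      ∀ B : Set ℕ, B ⊆ A → B.Infinite → TuringReducible (chi A) (chi B) := by
  refine ⟨Set.range (fenc a), ?_, red1 a, red2 a, fun B hBA hBinf => red3 a B hBA hBinf⟩
  exact Set.infinite_range_of_injective (fenc_strictMono a).injective

end GCH
end
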